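/- Let (a_t)_{t≥1}, (b_t)_{t≥1}, (g_t)_{t≥1} be sequences of real numbers satisfying the recurrence a_{t+1} = (1 - b_t/t)·a_t + g_t for all t ≥ 1. If b_t converges to a real number b > 0 and g_t converges to a real number g as t → ∞, then a_t/t converges to g/(b+1) as t → ∞. -/

import Mathlib

/-- Durrett's recurrence lemma: if `a (t+1) = (1 - b t / t) * a t + g t` for all `t ≥ 1`,
`b t → b₀ > 0` and `g t → g₀`, then `a t / t → g₀ / (b₀ + 1)`. -/
theorem durrett_recurrence (a b g : ℕ → ℝ) (b₀ g₀ : ℝ) (hb₀ : 0 < b₀)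
    (hrec : ∀ t : ℕ, 1 ≤ t → a (t + 1) = (1 - b t / (t : ℝ)) * a t + g t)
    (hb : Filter.Tendsto b Filter.atTop (nhds b₀))
    (hg : Filter.Tendsto g Filter.atTop (nhds g₀)) :
    Filter.Tendsto (fun t : ℕ => a t / (t : ℝ)) Filter.atTop (nhds (g₀ / (b₀ + 1))) := by
  set L : ℝ := g₀ / (b₀ + 1) with hL
  have hb1 : (0:ℝ) < b₀ + 1 := by linarith
  set y : ℕ → ℝ := fun t => a t - L * t with hy
  set δ : ℕ → ℝ := fun t => g t - L * (b t + 1) with hδ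
  have hδ0 : Filter.Tendsto δ Filter.atTop (nhds 0) := by
    have h0 : g₀ - L * (b₀ + 1) = 0 := by
      rw [hL, div_mul_cancel₀ _ (ne_of_gt hb1), sub_self]
    have h := hg.sub (((hb.add_const 1).const_mul L))
    rwa [h0] at h
  have hyrec : ∀ t : ℕ, 1 ≤ t → y (t + 1) = (1 - b t / t) * y t + δ t := by
    intro t ht
    have htR : (t : ℝ) ≠ 0 := by
      have : (1:ℝ) ≤ t := by exact_mod_cast ht
      linarith
    simp only [hy, hδ]
    rw [hrec t ht]
    push_cast
    field_simp
    ring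
  have hbt : Filter.Tendsto (fun t : ℕ => b t / (t : ℝ)) Filter.atTop (nhds 0) := by
    have h1 : Filter.Tendsto (fun t : ℕ => ((t : ℝ))⁻¹) Filter.atTop (nhds 0) :=
      tendsto_inv_atTop_zero.comp tendsto_natCast_atTop_atTop
    have := hb.mul h1
    simpa [div_eq_mul_inv] using this
  have hy0 : Filter.Tendsto (fun t : ℕ => y t / (t : ℝ)) Filter.atTop (nhds 0) := by
    rw [NormedAddCommGroup.tendsto_nhds_zero]
    intro ε hε
    have hε2 : (0:ℝ) < ε / 2 := by linarith
    have E1 : ∀ᶠ t in Filter.atTop, ‖δ t‖ < ε / 2 :=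
      (NormedAddCommGroup.tendsto_nhds_zero.mp hδ0) (ε / 2) hε2
    have E2 : ∀ᶠ t in Filter.atTop, 0 < b t := hb.eventually (eventually_gt_nhds hb₀)
    have E3 : ∀ᶠ t in Filter.atTop, b t / (t : ℝ) < 1 :=
      hbt.eventually (eventually_lt_nhds one_pos)
    have E4 : ∀ᶠ t : ℕ in Filter.atTop, 1 ≤ t := Filter.eventually_ge_atTop 1
    obtain ⟨T, hT⟩ := Filter.eventually_atTop.mp (((E1.and E2).and E3).and E4)
    -- key induction bound
    have key : ∀ n : ℕ, |y (T + n)| ≤ |y T| + (ε / 2) * n := by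
      intro n
      induction n with
      | zero => simp
      | succ n ih =>
        have hTn : T ≤ T + n := Nat.le_add_right T n
        obtain ⟨⟨⟨h1, h2⟩, h3⟩, h4⟩ := hT (T + n) hTn
        have hrec' := hyrec (T + n) h4
        have hfac0 : 0 ≤ 1 - b (T + n) / ((T + n : ℕ) : ℝ) := by linarith
        have hfac1 : 1 - b (T + n) / ((T + n : ℕ) : ℝ) ≤ 1 := by
          have htpos : (0:ℝ) < ((T + n : ℕ) : ℝ) := by
            exact_mod_cast Nat.lt_of_lt_of_le Nat.zero_lt_one h4
          have : 0 ≤ b (T + n) / ((T + n : ℕ) : ℝ) := by positivity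
          linarith
        have : |y (T + (n + 1))| ≤ |y (T + n)| + ε / 2 := by
          have heq : T + (n + 1) = (T + n) + 1 := by ring
          rw [heq, hrec']
          calc |(1 - b (T + n) / ((T + n : ℕ) : ℝ)) * y (T + n) + δ (T + n)|
              ≤ |(1 - b (T + n) / ((T + n : ℕ) : ℝ)) * y (T + n)| + |δ (T + n)| :=
                abs_add_le _ _
            _ ≤ |y (T + n)| + ε / 2 := by
                have h5 : |(1 - b (T + n) / ((T + n : ℕ) : ℝ)) * y (T + n)|
                    ≤ |y (T + n)| := by
                  rw [abs_mul]
                  have : |1 - b (T + n) / ((T + n : ℕ) : ℝ)| ≤ 1 := by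
                    rw [abs_of_nonneg hfac0]; exact hfac1
                  nlinarith [abs_nonneg (y (T + n))]
                have h6 : |δ (T + n)| ≤ ε / 2 := le_of_lt h1
                linarith
        push_cast
        push_cast at ih
        linarith
    -- finish
    have E5 : ∀ᶠ t : ℕ in Filter.atTop, |y T| / (t : ℝ) < ε / 2 := by
      have h1 : Filter.Tendsto (fun t : ℕ => |y T| / (t : ℝ)) Filter.atTop (nhds 0) := by
        have h2 : Filter.Tendsto (fun t : ℕ => ((t : ℝ))⁻¹) Filter.atTop (nhds 0) :=
          tendsto_inv_atTop_zero.comp tendsto_natCast_atTop_atTop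
        simpa [div_eq_mul_inv] using h2.const_mul (|y T|)
      have := h1.eventually (eventually_lt_nhds hε2)
      exact this
    filter_upwards [Filter.eventually_ge_atTop T, E5, Filter.eventually_ge_atTop 1]
      with t ht hE5 ht1
    obtain ⟨n, rfl⟩ := Nat.exists_eq_add_of_le ht
    have htpos : (0:ℝ) < ((T + n : ℕ) : ℝ) := by exact_mod_cast ht1
    have hn : (n : ℝ) ≤ ((T + n : ℕ) : ℝ) := by push_cast; linarith [Nat.cast_nonneg (α := ℝ) T]
    have hkey := key n
    have : |y (T + n)| ≤ |y T| + (ε / 2) * ((T + n : ℕ) : ℝ) := by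
      nlinarith
    rw [Real.norm_eq_abs, abs_div, abs_of_pos htpos]
    rw [div_lt_iff₀ htpos]
    have hYT : |y T| < ε / 2 * ((T + n : ℕ) : ℝ) := by
      have h7 := mul_lt_mul_of_pos_right hE5 htpos
      rwa [div_mul_cancel₀ _ (ne_of_gt htpos)] at h7
    linarith
  have hfin := hy0.add_const L
  rw [zero_add] at hfin
  refine hfin.congr' ?_
  filter_upwards [Filter.eventually_ge_atTop 1] with t ht
  have htR : (t : ℝ) ≠ 0 := by
    have : (1:ℝ) ≤ t := by exact_mod_cast ht
    linarith
  simp only [hy]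
  field_simp
  ring
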